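/- If Z ∈ {0,1}, e(X) = E[Z | X] with e(X) < 1 almost surely, and Y is an integrable random variable with E[Y(1-Z)·e(X)/(1-e(X))] finite, then E[Z·E[Y | X, Z=0]] = E[(e(X)/(1-e(X)))·(1-Z)·Y], where E[Y | X, Z=0] denotes a version of the conditional expectation of Y given X on the event {Z=0}. -/

import Mathlib

open MeasureTheory

/-- Key ATT identification step: if `Z ∈ {0,1}`, `e = E[Z | X]` with `e < 1` a.s.,
and `g` is a version of `E[Y | X, Z = 0]`, i.e. an `m`-measurable function with
`E[(1-Z)·Y | X] = (1-e)·g` a.s. (where `m` is the σ-algebra generated by `X`),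
then `E[Z·g] = E[(e/(1-e))·(1-Z)·Y]`. -/
theorem att_key_identification
    {Ω : Type*} {m0 : MeasurableSpace Ω} (μ : Measure Ω) [IsProbabilityMeasure μ]
    (m : MeasurableSpace Ω) (hm : m ≤ m0)
    (Z Y : Ω → ℝ) (hZ01 : ∀ ω, Z ω = 0 ∨ Z ω = 1)
    (hZint : Integrable Z μ) (hYint : Integrable Y μ)
    (e : Ω → ℝ) (he : e = μ[Z|m]) (he1 : ∀ᵐ ω ∂μ, e ω < 1)
    (g : Ω → ℝ) (hg_meas : StronglyMeasurable[m] g)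
    (hg : (μ[fun ω => (1 - Z ω) * Y ω | m]) =ᵐ[μ] fun ω => (1 - e ω) * g ω)
    (hZg : Integrable (fun ω => Z ω * g ω) μ)
    (hwY : Integrable (fun ω => (e ω / (1 - e ω)) * ((1 - Z ω) * Y ω)) μ) :
    ∫ ω, Z ω * g ω ∂μ = ∫ ω, (e ω / (1 - e ω)) * ((1 - Z ω) * Y ω) ∂μ := by
  have he_meas : StronglyMeasurable[m] e := he ▸ stronglyMeasurable_condExp
  have hw_meas : StronglyMeasurable[m] (fun ω => e ω / (1 - e ω)) :=
    (he_meas.measurable.div ((measurable_const.sub he_meas.measurable))).stronglyMeasurable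
  -- integrability of (1-Z)Y
  have h1Z : Integrable (fun ω => (1 - Z ω) * Y ω) μ := by
    apply hYint.bdd_mul (c := 1) ((aestronglyMeasurable_const).sub hZint.aestronglyMeasurable)
    refine ae_of_all _ (fun ω => ?_)
    rcases hZ01 ω with h | h <;> simp [h]
  -- LHS
  have hZg' : Integrable (fun ω => g ω * Z ω) μ := by
    simpa [mul_comm] using hZg
  have hcond1 : μ[fun ω => g ω * Z ω | m] =ᵐ[μ] fun ω => g ω * (μ[Z|m]) ω :=
    condExp_mul_of_stronglyMeasurable_left hg_meas hZg' hZint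
  have hL : ∫ ω, Z ω * g ω ∂μ = ∫ ω, g ω * e ω ∂μ := by
    calc ∫ ω, Z ω * g ω ∂μ = ∫ ω, g ω * Z ω ∂μ := by simp [mul_comm]
    _ = ∫ ω, (μ[fun ω => g ω * Z ω | m]) ω ∂μ := (integral_condExp hm).symm
    _ = ∫ ω, g ω * e ω ∂μ := by
        refine integral_congr_ae ?_
        filter_upwards [hcond1] with ω hω
        simp only [hω, he]
  -- RHS
  have hcond2 : μ[fun ω => (e ω / (1 - e ω)) * ((1 - Z ω) * Y ω) | m]
      =ᵐ[μ] fun ω => (e ω / (1 - e ω)) * (μ[fun ω => (1 - Z ω) * Y ω | m]) ω :=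
    condExp_mul_of_stronglyMeasurable_left hw_meas hwY h1Z
  have hR : ∫ ω, (e ω / (1 - e ω)) * ((1 - Z ω) * Y ω) ∂μ = ∫ ω, g ω * e ω ∂μ := by
    calc ∫ ω, (e ω / (1 - e ω)) * ((1 - Z ω) * Y ω) ∂μ
        = ∫ ω, (μ[fun ω => (e ω / (1 - e ω)) * ((1 - Z ω) * Y ω) | m]) ω ∂μ :=
          (integral_condExp hm).symm
    _ = ∫ ω, g ω * e ω ∂μ := by
        refine integral_congr_ae ?_
        filter_upwards [hcond2, hg, he1] with ω h2 hgω h1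
        simp only [h2, hgω]
        have hne : 1 - e ω ≠ 0 := by linarith
        field_simp
  rw [hL, hR]
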